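/- For every real ε with 0 < ε < 1/2 there exist an integer m ≥ 3 and a real k > 0 such that the following holds for every b : ℕ → {0,1}: define α_m(j) = ∑_{i=0}^{∞} b(j+i)/m^{i+1}; then for every l ∈ ℕ and every guess sequence g : ℕ → {0,1}, with reals defined by x₀ = α_m(0) and x_{j+1} = m·x_j − g(j), one has: if g(j) = b(j) for all j ≤ l then 1/(1 + 2k|x_{l+1}|) ≥ 1 − ε, and if g(j) ≠ b(j) for some j ≤ l then 1/(1 + 2k|x_{l+1}|) ≤ ε. -/

import Mathlib

noncomputable def alphaBase (m : ℕ) (b : ℕ → Fin 2) (j : ℕ) : ℝ :=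
  ∑' i : ℕ, ((b (j + i) : ℕ) : ℝ) / (m : ℝ) ^ (i + 1)

lemma alpha_summable (m : ℕ) (hm : 3 ≤ m) (b : ℕ → Fin 2) (j : ℕ) :
    Summable (fun i : ℕ => ((b (j + i) : ℕ) : ℝ) / (m : ℝ) ^ (i + 1)) := by
  have hm1 : (1:ℝ) < m := by exact_mod_cast (by omega : 1 < m)
  have hgeo : Summable (fun i : ℕ => ((m:ℝ)⁻¹) ^ (i+1)) := by
    apply Summable.comp_injective (summable_geometric_of_lt_one (by positivity)
      (by rw [inv_lt_one_iff₀]; right; linarith)) (add_left_injective 1)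
  apply Summable.of_nonneg_of_le (fun i => by positivity) _ hgeo
  intro i
  have hb : ((b (j+i) : ℕ) : ℝ) ≤ 1 := by
    have := (b (j+i)).is_lt
    exact_mod_cast Nat.lt_succ_iff.mp this
  rw [div_le_iff₀ (by positivity), inv_pow, inv_mul_cancel₀ (by positivity)]
  exact hb

lemma alpha_nonneg (m : ℕ) (b : ℕ → Fin 2) (j : ℕ) : 0 ≤ alphaBase m b j :=
  tsum_nonneg (fun i => by positivity)

lemma alpha_le (m : ℕ) (hm : 3 ≤ m) (b : ℕ → Fin 2) (j : ℕ) :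
    alphaBase m b j ≤ 1 / ((m : ℝ) - 1) := by
  have hm1 : (1:ℝ) < m := by exact_mod_cast (by omega : 1 < m)
  have hgeo : Summable (fun i : ℕ => ((m:ℝ)⁻¹) ^ (i+1)) := by
    apply Summable.comp_injective (summable_geometric_of_lt_one (by positivity)
      (by rw [inv_lt_one_iff₀]; right; linarith)) (add_left_injective 1)
  have hle : alphaBase m b j ≤ ∑' i : ℕ, ((m:ℝ)⁻¹) ^ (i+1) := by
    apply Summable.tsum_le_tsum _ (alpha_summable m hm b j) hgeo
    intro i
    have hb : ((b (j+i) : ℕ) : ℝ) ≤ 1 := by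
      have := (b (j+i)).is_lt
      exact_mod_cast Nat.lt_succ_iff.mp this
    rw [div_le_iff₀ (by positivity), inv_pow, inv_mul_cancel₀ (by positivity)]
    exact hb
  refine hle.trans_eq ?_
  have : ∑' i : ℕ, ((m:ℝ)⁻¹) ^ (i+1) = (m:ℝ)⁻¹ * ∑' i : ℕ, ((m:ℝ)⁻¹) ^ i := by
    rw [← tsum_mul_left]; exact tsum_congr (fun i => by ring)
  rw [this, tsum_geometric_of_lt_one (by positivity) (by rw [inv_lt_one_iff₀]; right; linarith)]
  field_simp

lemma alpha_rec (m : ℕ) (hm : 3 ≤ m) (b : ℕ → Fin 2) (j : ℕ) :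
    (m : ℝ) * alphaBase m b j = ((b j : ℕ) : ℝ) + alphaBase m b (j + 1) := by
  have hm0 : (0:ℝ) < m := by positivity
  have h := Summable.tsum_eq_zero_add (alpha_summable m hm b j)
  unfold alphaBase
  rw [h]
  simp only [Nat.add_zero, pow_one]
  have : ∑' i : ℕ, ((b (j + (i+1)) : ℕ) : ℝ) / (m : ℝ) ^ (i + 1 + 1)
      = (m:ℝ)⁻¹ * ∑' i : ℕ, ((b (j + 1 + i) : ℕ) : ℝ) / (m : ℝ) ^ (i + 1) := by
    rw [← tsum_mul_left]
    refine tsum_congr (fun i => ?_)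
    rw [show j + (i+1) = j + 1 + i by ring, pow_succ, ← div_div, div_eq_mul_inv, mul_comm]
  rw [this]
  field_simp
  ring

set_option maxHeartbeats 1600000 in
theorem arbitrary_small_error (ε : ℝ) (hε0 : 0 < ε) (hε : ε < 1 / 2) :
    ∃ m : ℕ, 3 ≤ m ∧ ∃ k : ℝ, 0 < k ∧
      ∀ b : ℕ → Fin 2, ∀ l : ℕ, ∀ g : ℕ → Fin 2, ∀ x : ℕ → ℝ,
        x 0 = alphaBase m b 0 →
        (∀ j : ℕ, x (j + 1) = (m : ℝ) * x j - ((g j : ℕ) : ℝ)) →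
        ((∀ j ≤ l, g j = b j) → 1 / (1 + 2 * k * |x (l + 1)|) ≥ 1 - ε) ∧
        ((∃ j ≤ l, g j ≠ b j) → 1 / (1 + 2 * k * |x (l + 1)|) ≤ ε) := by
  obtain ⟨m, hm, hMε⟩ : ∃ m : ℕ, 3 ≤ m ∧ 1 ≤ ε^2 * ((m:ℝ) - 2) := by
    refine ⟨3 + ⌈(ε⁻¹)^2⌉₊, by omega, ?_⟩
    have hceil : (ε⁻¹)^2 ≤ (⌈(ε⁻¹)^2⌉₊:ℝ) := Nat.le_ceil _
    have hinv : ε^2 * (ε⁻¹)^2 = 1 := by field_simp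
    push_cast
    nlinarith [sq_nonneg ε]
  set M : ℝ := (m : ℝ) with hMdef
  have hM3 : (3:ℝ) ≤ M := by rw [hMdef]; exact_mod_cast hm
  have hM1p : (0:ℝ) < M - 1 := by linarith
  have hM2p : (0:ℝ) < M - 2 := by linarith
  have hε1 : (0:ℝ) < 1 - ε := by linarith
  obtain ⟨k, hk0, hk_eq⟩ : ∃ k : ℝ, 0 < k ∧ 2 * k * (ε * (M - 2)) = (1 - ε) * (M - 1) := by
    refine ⟨(1 - ε) * (M - 1) / (2 * ε * (M - 2)), div_pos (mul_pos hε1 hM1p)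
      (mul_pos (mul_pos two_pos hε0) hM2p), ?_⟩
    field_simp
  refine ⟨m, hm, k, hk0, ?_⟩
  have h2k : 2 * k ≤ ε * (M - 1) := by
    nlinarith [hk_eq, mul_pos hε0 hM2p, mul_le_mul_of_nonneg_right hMε hM1p.le]
  intro b l g x hx0 hrec
  have hαr := fun j => alpha_rec m hm b j
  have hα0 := fun j => alpha_nonneg m b j
  have hα1 : ∀ j, alphaBase m b j * (M - 1) ≤ 1 := by
    intro j
    have := alpha_le m hm b j
    rw [le_div_iff₀ hM1p] at this
    exact this
  -- prefix lemma
  have hpre : ∀ n, (∀ j < n, g j = b j) → x n = alphaBase m b n := by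
    intro n
    induction n with
    | zero => intro _; exact hx0
    | succ n ih =>
      intro h
      rw [hrec n, ih (fun j hj => h j (hj.trans (Nat.lt_succ_self n))),
        h n (Nat.lt_succ_self n)]
      have := hαr n
      linarith
  constructor
  · -- correct case
    intro hcor
    have hx : x (l+1) = alphaBase m b (l+1) :=
      hpre (l+1) (fun j hj => hcor j (Nat.lt_succ_iff.mp hj))
    have habs : |x (l+1)| * (M - 1) ≤ 1 := by
      rw [hx, abs_of_nonneg (hα0 (l+1))]; exact hα1 (l+1)
    have ht : 2 * k * |x (l+1)| ≤ ε := by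
      nlinarith [mul_le_mul_of_nonneg_right h2k (abs_nonneg (x (l+1))),
        mul_le_mul_of_nonneg_left habs hε0.le]
    have hpos : 0 ≤ 2 * k * |x (l+1)| := by positivity
    rw [ge_iff_le, le_div_iff₀ (by linarith)]
    nlinarith
  · -- wrong case
    intro hw
    have key : ∀ n, (∃ j < n, g j ≠ b j) → M - 2 ≤ |x n| * (M - 1) := by
      intro n
      induction n with
      | zero => rintro ⟨j, hj, _⟩; omega
      | succ n ih =>
        rintro ⟨j, hj, hjne⟩
        by_cases hcase : ∃ i < n, g i ≠ b i
        · have hxn := ih hcase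
          have habs : M * |x n| - |((g n : ℕ):ℝ)| ≤ |x (n+1)| := by
            rw [hrec n]
            have h := abs_sub_abs_le_abs_sub (M * x n) (((g n : ℕ):ℝ))
            rw [abs_mul, abs_of_nonneg (by linarith : (0:ℝ) ≤ M)] at h
            linarith
          have hg1 : |((g n : ℕ):ℝ)| ≤ 1 := by
            rw [abs_of_nonneg (by positivity)]
            exact_mod_cast Nat.lt_succ_iff.mp (g n).is_lt
          nlinarith [mul_le_mul_of_nonneg_right habs hM1p.le,
            mul_le_mul_of_nonneg_right hg1 hM1p.le,
            mul_le_mul_of_nonneg_left hxn (by linarith : (0:ℝ) ≤ M),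
            mul_nonneg (by linarith : (0:ℝ) ≤ M - 3) (by linarith : (0:ℝ) ≤ M - 1)]
        · push_neg at hcase
          have hjn : j = n := by
            by_contra hne
            exact hjne (hcase j (by omega))
          subst hjn
          have hxn : x j = alphaBase m b j := hpre j hcase
          have hx1 : x (j+1) = ((b j : ℕ):ℝ) + alphaBase m b (j+1) - ((g j : ℕ):ℝ) := by
            rw [hrec j, hxn]
            have := hαr j
            linarith
          have hvals : ((b j : ℕ) = 0 ∧ (g j : ℕ) = 1) ∨ ((b j : ℕ) = 1 ∧ (g j : ℕ) = 0) := by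
            have h1 := (b j).is_lt
            have h2 := (g j).is_lt
            have h3 : (b j : ℕ) ≠ (g j : ℕ) := fun h => hjne (Fin.ext h.symm)
            omega
          have ha0 := hα0 (j+1)
          have ha1 := hα1 (j+1)
          rcases hvals with ⟨h1, h2⟩ | ⟨h1, h2⟩
          · rw [h1, h2] at hx1
            have hle : alphaBase m b (j+1) ≤ 1 := by
              nlinarith [mul_nonneg ha0 (by linarith : (0:ℝ) ≤ M - 3)]
            rw [show x (j+1) = alphaBase m b (j+1) - 1 by rw [hx1]; push_cast; ring,
              abs_of_nonpos (by linarith)]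
            nlinarith
          · rw [h1, h2] at hx1
            rw [show x (j+1) = 1 + alphaBase m b (j+1) by rw [hx1]; push_cast; ring,
              abs_of_nonneg (by linarith)]
            nlinarith [mul_nonneg ha0 hM1p.le]
    obtain ⟨j, hj, hjne⟩ := hw
    have hxl : M - 2 ≤ |x (l+1)| * (M - 1) := key (l+1) ⟨j, Nat.lt_succ_iff.mpr hj, hjne⟩
    have hpos : 0 ≤ 2 * k * |x (l+1)| := by positivity
    rw [div_le_iff₀ (by linarith)]
    -- need: 1 ≤ ε * (1 + 2*k*|x (l+1)|), i.e. 1 - ε ≤ ε * 2k * |x|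
    nlinarith [mul_le_mul_of_nonneg_left hxl (mul_pos (mul_pos two_pos hk0) hε0).le,
      hk_eq, mul_pos hε0 hM2p, abs_nonneg (x (l+1))]
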